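/- Let P be an increasing graph property, and let π be a sink of the P-subposet of the n-degree-poset (i.e., a maximal element under majorization among degree sequences of edge-maximal non-P graphs on n vertices). If π violates a P-weakly-optimal Chvátal-type condition c, then c is equivalent to C(π), i.e., Π(c) = π. -/

import Mathlib

open SimpleGraph

/-- Degree of a vertex. -/
noncomputable def ndeg {V : Type*} (G : SimpleGraph V) (v : V) : ℕ :=
  Nat.card {u | G.Adj v u}

/-- `G` (a graph on `Fin n`) realizes the sequence `π`. -/
def RealizesF {n : ℕ} (G : SimpleGraph (Fin n)) (π : Fin n → ℕ) : Prop :=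
  ∃ e : Equiv.Perm (Fin n), ∀ i, ndeg G (e i) = π i

/-- A Chvátal-type condition `d_{i_1} ≥ k_{i_1} ∨ … ∨ d_{i_r} ≥ k_{i_r}`. -/
structure ChvatalCond (n : ℕ) where
  idx : Finset (Fin n)
  bound : Fin n → ℕ
  idx_nonempty : idx.Nonempty
  bound_mono : ∀ i ∈ idx, ∀ j ∈ idx, i ≤ j → bound i ≤ bound j
  bound_range : ∀ i ∈ idx, 1 ≤ bound i ∧ bound i ≤ n

/-- A sequence `d` satisfies a Chvátal-type condition. -/
def ChvatalCond.Sat {n : ℕ} (c : ChvatalCond n) (d : Fin n → ℕ) : Prop :=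
  ∃ i ∈ c.idx, c.bound i ≤ d i

/-- `G` is edge-maximal without the (increasing) property `P`. -/
def EdgeMaxNon {n : ℕ} (P : SimpleGraph (Fin n) → Prop) (G : SimpleGraph (Fin n)) : Prop :=
  ¬ P G ∧ ∀ H, G < H → P H

/-- `π` is a sink of the `P`-subposet: it is the (nondecreasing) degree sequence of an
edge-maximal non-`P` graph and is maximal under majorization among such sequences. -/
def IsSink (n : ℕ) (P : SimpleGraph (Fin n) → Prop) (π : Fin n → ℕ) : Prop :=
  Monotone π ∧ (∃ G, EdgeMaxNon P G ∧ RealizesF G π) ∧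
    ∀ π' : Fin n → ℕ, Monotone π' → (∃ G, EdgeMaxNon P G ∧ RealizesF G π') →
      π ≤ π' → π' = π

/-- `c` is `P`-weakly-optimal: every nondecreasing `n`-sequence violating `c` is majorized
by a graphical sequence having a realization without property `P`. -/
def WeaklyOpt (n : ℕ) (P : SimpleGraph (Fin n) → Prop) (c : ChvatalCond n) : Prop :=
  ∀ d : Fin n → ℕ, Monotone d → (∀ j, d j ≤ n - 1) → ¬ c.Sat d →
    ∃ π' : Fin n → ℕ, Monotone π' ∧ d ≤ π' ∧ ∃ G, RealizesF G π' ∧ ¬ P G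


-- Auxiliary material

lemma ndeg_le {n : ℕ} (G : SimpleGraph (Fin n)) (v : Fin n) : ndeg G v ≤ n - 1 := by
  have hsub : {u | G.Adj v u} ⊆ {v}ᶜ := by
    intro u hu hv
    simp only [Set.mem_singleton_iff] at hv
    exact G.irrefl (hv ▸ hu)
  have h2 : Set.ncard {u | G.Adj v u} ≤ Set.ncard ({v}ᶜ : Set (Fin n)) :=
    Set.ncard_le_ncard hsub (Set.toFinite _)
  have h3 : Set.ncard ({v}ᶜ : Set (Fin n)) = n - 1 := by
    have := Set.ncard_add_ncard_compl ({v} : Set (Fin n))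
    simp [Set.ncard_singleton, Set.ncard_univ] at this
    omega
  have h1 : ndeg G v = Set.ncard {u | G.Adj v u} := rfl
  omega

lemma ndeg_mono {n : ℕ} {G H : SimpleGraph (Fin n)} (h : G ≤ H) (v : Fin n) :
    ndeg G v ≤ ndeg H v :=
  Set.ncard_le_ncard (fun u hu => h hu) (Set.toFinite _)

lemma mono_le_of_perm {n : ℕ} {a b : Fin n → ℕ} (ha : Monotone a) (hb : Monotone b)
    (τ : Equiv.Perm (Fin n)) (h : ∀ i, a i ≤ b (τ i)) : a ≤ b := by
  intro i
  have hex : ∃ j, i ≤ j ∧ τ j ≤ i := by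
    by_contra hcon
    push_neg at hcon
    have hmaps : ∀ j ∈ Finset.Ici i, τ j ∈ Finset.Ioi i := by
      intro j hj
      simp only [Finset.mem_Ici] at hj
      simp only [Finset.mem_Ioi]
      exact hcon j hj
    have hcard := Finset.card_le_card_of_injOn τ hmaps (τ.injective.injOn)
    rw [Fin.card_Ici, Fin.card_Ioi] at hcard
    have := i.isLt
    omega
  obtain ⟨j, hij, hji⟩ := hex
  calc a i ≤ a j := ha hij
    _ ≤ b (τ j) := h j
    _ ≤ b i := hb hji

lemma exists_edgemax {n : ℕ} (P : SimpleGraph (Fin n) → Prop) (G : SimpleGraph (Fin n))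
    (hG : ¬ P G) : ∃ H, G ≤ H ∧ EdgeMaxNon P H := by
  classical
  obtain ⟨H, hHmem, hmax⟩ := Set.Finite.exists_maximalFor id
    {H | G ≤ H ∧ ¬ P H} (Set.toFinite _) ⟨G, le_refl G, hG⟩
  refine ⟨H, hHmem.1, ⟨hHmem.2, fun H' hlt => ?_⟩⟩
  by_contra hP'
  have hmem' : H' ∈ {H | G ≤ H ∧ ¬ P H} := ⟨hHmem.1.trans hlt.le, hP'⟩
  have heq : id H = id H' := le_antisymm hlt.le (hmax hmem' hlt.le)
  simp only [id] at heq
  exact hlt.ne heq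

/-- The set whose min is `Π(c)_j`. -/
def muSet {n : ℕ} (c : ChvatalCond n) (j : Fin n) : Finset ℕ :=
  insert (n - 1) ((c.idx.filter (fun i => j ≤ i)).image (fun i => c.bound i - 1))

/-- `Π(c)`, the maximal nondecreasing sequence (bounded by `n-1`) violating `c`. -/
noncomputable def muSeq {n : ℕ} (c : ChvatalCond n) (j : Fin n) : ℕ :=
  (muSet c j).min' ⟨n - 1, Finset.mem_insert_self _ _⟩

lemma muSeq_le_nsub {n : ℕ} (c : ChvatalCond n) (j : Fin n) : muSeq c j ≤ n - 1 :=
  Finset.min'_le _ _ (Finset.mem_insert_self _ _)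

lemma muSeq_le_bound {n : ℕ} (c : ChvatalCond n) {j i : Fin n} (hi : i ∈ c.idx)
    (hji : j ≤ i) : muSeq c j ≤ c.bound i - 1 :=
  Finset.min'_le _ _ (Finset.mem_insert_of_mem
    (Finset.mem_image_of_mem _ (Finset.mem_filter.2 ⟨hi, hji⟩)))

lemma le_muSeq {n : ℕ} (c : ChvatalCond n) {j : Fin n} {x : ℕ} (h1 : x ≤ n - 1)
    (h2 : ∀ i ∈ c.idx, j ≤ i → x ≤ c.bound i - 1) : x ≤ muSeq c j := by
  apply Finset.le_min'
  intro y hy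
  rcases Finset.mem_insert.1 hy with rfl | hy
  · exact h1
  · obtain ⟨i, hi, rfl⟩ := Finset.mem_image.1 hy
    obtain ⟨hi1, hi2⟩ := Finset.mem_filter.1 hi
    exact h2 i hi1 hi2

lemma muSeq_mono {n : ℕ} (c : ChvatalCond n) : Monotone (muSeq c) := by
  intro j j' hjj'
  have hsub : muSet c j' ⊆ muSet c j := by
    apply Finset.insert_subset_insert
    apply Finset.image_subset_image
    intro i hi
    obtain ⟨hi1, hi2⟩ := Finset.mem_filter.1 hi
    exact Finset.mem_filter.2 ⟨hi1, hjj'.trans hi2⟩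
  exact Finset.min'_le _ _ (hsub (Finset.min'_mem _ _))

lemma not_sat_muSeq {n : ℕ} (c : ChvatalCond n) : ¬ c.Sat (muSeq c) := by
  rintro ⟨i, hi, hle⟩
  have h1 := muSeq_le_bound c hi (le_refl i)
  have h2 := (c.bound_range i hi).1
  omega

lemma le_muSeq_of_not_sat {n : ℕ} (c : ChvatalCond n) {d : Fin n → ℕ} (hd : Monotone d)
    (hdn : ∀ j, d j ≤ n - 1) (hns : ¬ c.Sat d) : d ≤ muSeq c := by
  intro j
  apply le_muSeq c (hdn j)
  intro i hi hji
  have hlt : d i < c.bound i := by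
    by_contra h
    exact hns ⟨i, hi, by omega⟩
  have := hd hji
  omega

theorem stmt5 (n : ℕ) (P : SimpleGraph (Fin n) → Prop)
    (hP : ∀ G H, G ≤ H → P G → P H)
    (π : Fin n → ℕ) (hsink : IsSink n P π)
    (c : ChvatalCond n) (hwo : WeaklyOpt n P c)
    (hviol : ¬ c.Sat π) :
    -- `c ≅ C(π)`: on nondecreasing `n`-sequences, `c` is equivalent to
    -- `d_1 ≥ π_1 + 1 ∨ … ∨ d_n ≥ π_n + 1`
    ∀ d : Fin n → ℕ, Monotone d → (∀ j, d j ≤ n - 1) →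
      (c.Sat d ↔ ∃ j, π j + 1 ≤ d j) := by
  classical
  -- Step 1: π ≤ μ where μ = Π(c)
  obtain ⟨hπmono, ⟨G₀, hG₀max, hG₀real⟩, hπmax⟩ := hsink
  have hπn : ∀ j, π j ≤ n - 1 := by
    intro j
    obtain ⟨e, he⟩ := hG₀real
    rw [← he j]
    exact ndeg_le G₀ (e j)
  have hπμ : π ≤ muSeq c := le_muSeq_of_not_sat c hπmono hπn hviol
  -- Step 2: μ ≤ π via weak optimality and the sink property
  obtain ⟨π', hπ'mono, hμπ', G, ⟨e, he⟩, hGnP⟩ :=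
    hwo (muSeq c) (muSeq_mono c) (muSeq_le_nsub c) (not_sat_muSeq c)
  obtain ⟨H, hGH, hHmax⟩ := exists_edgemax P G hGnP
  -- sorted degree sequence of H
  set π'' : Fin n → ℕ := ndeg H ∘ Tuple.sort (ndeg H) with hπ''def
  have hπ''mono : Monotone π'' := Tuple.monotone_sort (ndeg H)
  have hπ''real : RealizesF H π'' := ⟨Tuple.sort (ndeg H), fun i => rfl⟩
  have hπ'π'' : π' ≤ π'' := by
    apply mono_le_of_perm hπ'mono hπ''mono (e.trans (Tuple.sort (ndeg H)).symm)
    intro i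
    have h1 : π' i = ndeg G (e i) := (he i).symm
    have h2 : ndeg G (e i) ≤ ndeg H (e i) := ndeg_mono hGH (e i)
    have h3 : π'' ((e.trans (Tuple.sort (ndeg H)).symm) i) = ndeg H (e i) := by
      simp [hπ''def, Equiv.trans_apply]
    omega
  have hππ'' : π ≤ π'' := le_trans hπμ (le_trans hμπ' hπ'π'')
  have hπ''eq : π'' = π := hπmax π'' hπ''mono ⟨H, hHmax, hπ''real⟩ hππ''
  have hμπ : muSeq c ≤ π := hπ''eq ▸ (hμπ'.trans hπ'π'')
  have hμeq : muSeq c = π := le_antisymm hμπ hπμ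
  -- Step 3: the equivalence
  intro d hdmono hdn
  constructor
  · rintro ⟨i, hi, hle⟩
    refine ⟨i, ?_⟩
    have h1 : π i ≤ c.bound i - 1 := hμeq ▸ muSeq_le_bound c hi (le_refl i)
    have h2 := (c.bound_range i hi).1
    omega
  · rintro ⟨j, hj⟩
    by_contra hns
    have hdμ : d ≤ muSeq c := le_muSeq_of_not_sat c hdmono hdn hns
    have hfin : d j ≤ π j := by
      have h := hdμ j
      rwa [hμeq] at h
    omega
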